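/- arXiv:1811.08247 — 2 statements merged into one kernel-verified Lean document; each statement's English description precedes it below -/
import Mathlib

section
/- Let Ω ⊂ ℝ³ be open, bounded, connected with Lipschitz boundary, let n ∈ ℝ³ be a unit vector, and let h ∈ C([0,T]) be non-decreasing with h(0) = inf_{x∈Ω} x·n and h(T) = sup_{x∈Ω} x·n. For t ∈ [0,T] set Ω_M(t) := Ω ∩ {x : x·n < h(t)} and Ω_A(t) := Ω ∩ {x : x·n > h(t)}. Let z ∈ W^{1,∞}(Ω;ℝ³) be such that for a.e. t ∈ (0,T) there exists Z_t ∈ W^{1,∞}(Ω;ℝ³) with ∇Z_t = ∇z a.e. in Ω_M(t) and ∇Z_t = 0 a.e. in Ω_A(t). If moreover the set Ω ∩ {x : x·n = h(t)} is connected for every t ∈ (0,T), then there exists a Lipschitz function f : ℝ → ℝ³ such that z(x) = f(x·n) for all x ∈ Ω. -/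
open MeasureTheory Set
open scoped NNReal ENNReal

noncomputable section

/-- ℝ³ with its Euclidean structure. -/
abbrev E3 : Type := EuclideanSpace ℝ (Fin 3)

/-- 3×3 real matrices. -/
abbrev Mat3 : Type := Matrix (Fin 3) (Fin 3) ℝ

/-- Euclidean dot product on ℝ³. -/
def dot3 (x y : E3) : ℝ := ∑ i, x i * y i

/-- The rank-one matrix `a ⊗ n`, with entries `a i * n j`. -/
def tens (a n : E3) : Mat3 := Matrix.of fun i j => a i * n j

/-- A 3×3 matrix viewed as a continuous linear map ℝ³ → ℝ³. -/
def matCLM (M : Mat3) : E3 →L[ℝ] E3 := Matrix.toEuclideanCLM (𝕜 := ℝ) M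

/-- A matrix acting on a vector of ℝ³. -/
def mulV (M : Mat3) (x : E3) : E3 := matCLM M x

/-- Membership in SO(3). -/
def IsSO3 (Q : Mat3) : Prop := Q.transpose * Q = 1 ∧ Q.det = 1

/-- Ω has Lipschitz boundary: near every boundary point, after a rotation, Ω is the
subgraph of a Lipschitz function. -/
def HasLipschitzBoundary (Ω : Set E3) : Prop :=
  ∀ x ∈ frontier Ω, ∃ (Q : Mat3) (K : ℝ≥0) (ψ : ℝ × ℝ → ℝ) (U : Set E3),
    IsSO3 Q ∧ LipschitzWith K ψ ∧ IsOpen U ∧ x ∈ U ∧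
    Ω ∩ U = {y : E3 | y ∈ U ∧ mulV Q y 2 < ψ (mulV Q y 0, mulV Q y 1)}

set_option maxHeartbeats 2000000

/-- Quantitative 1-D lemma: a Lipschitz function on `[a,b]` whose derivative exists a.e.
on `(a,b)` and has norm at most `K` there satisfies `‖g b - g a‖ ≤ K (b-a)`. -/
theorem lip1d {F : Type*} [NormedAddCommGroup F] [NormedSpace ℝ F]
    (g : ℝ → F) (a b : ℝ) (hab : a ≤ b) (K'' : ℝ≥0)
    (hg : LipschitzOnWith K'' g (Icc a b)) (K : ℝ) (hK : 0 ≤ K)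
    (hd : ∀ᵐ t ∂(volume.restrict (Ioo a b)), ∃ d, HasDerivAt g d t ∧ ‖d‖ ≤ K) :
    ‖g b - g a‖ ≤ K * (b - a) := by
  -- reduce to an ε-version
  set C : ℝ := b - a + K'' + K + 1 with hC
  have hCpos : 0 < C := by rw [hC]; have h1 := K''.coe_nonneg; linarith
  have main : ∀ ε : ℝ, 0 < ε → ε ≤ 1 → ‖g b - g a‖ ≤ K * (b - a) + ε * C := by
    intro ε hε hε1
    -- the bad set is null
    have hN : volume ({t | ¬ ∃ d, HasDerivAt g d t ∧ ‖d‖ ≤ K} ∩ Ioo a b) = 0 := by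
      have := ae_iff.mp hd
      rwa [Measure.restrict_apply' measurableSet_Ioo] at this
    set N' : Set ℝ := ({t | ¬ ∃ d, HasDerivAt g d t ∧ ‖d‖ ≤ K} ∩ Ioo a b) ∪ {a, b} with hN'def
    have hN' : volume N' = 0 := by
      refine measure_union_null hN ?_
      have : ({a, b} : Set ℝ).Finite := by simp
      exact this.measure_zero _
    obtain ⟨O, hNO, hOopen, hOvol⟩ :=
      Set.exists_isOpen_lt_of_lt N' (ENNReal.ofReal ε) (by rw [hN']; exact ENNReal.ofReal_pos.mpr hε)
    have hOfin : volume O ≠ ∞ := (hOvol.trans ENNReal.ofReal_lt_top).ne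
    -- the "mass" function
    set M : ℝ → ℝ := fun t => (volume (O ∩ Ioc a t)).toReal with hM
    have hMfin : ∀ t, volume (O ∩ Ioc a t) ≠ ∞ :=
      fun t => (lt_of_le_of_lt (measure_mono inter_subset_left) (hOvol.trans ENNReal.ofReal_lt_top)).ne
    have hMa : M a = 0 := by simp [hM]
    have hMmono : ∀ s t : ℝ, s ≤ t → M s ≤ M t := by
      intro s t hst
      exact ENNReal.toReal_le_toReal (hMfin s) (hMfin t) |>.mpr
        (measure_mono (inter_subset_inter_right _ (Ioc_subset_Ioc_right hst)))
    have hMadd : ∀ s t : ℝ, s ≤ t → M t ≤ M s + (t - s) := by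
      intro s t hst
      have h1 : O ∩ Ioc a t ⊆ (O ∩ Ioc a s) ∪ Ioc s t := by
        intro x ⟨hxO, hx2⟩
        rcases le_or_gt x s with hc | hc
        · exact Or.inl ⟨hxO, hx2.1, hc⟩
        · exact Or.inr ⟨hc, hx2.2⟩
      have h2 : volume (O ∩ Ioc a t) ≤ volume (O ∩ Ioc a s) + ENNReal.ofReal (t - s) := by
        calc volume (O ∩ Ioc a t) ≤ volume ((O ∩ Ioc a s) ∪ Ioc s t) := measure_mono h1
          _ ≤ volume (O ∩ Ioc a s) + volume (Ioc s t) := measure_union_le _ _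
          _ = volume (O ∩ Ioc a s) + ENNReal.ofReal (t - s) := by rw [Real.volume_Ioc]
      have := ENNReal.toReal_le_toReal (hMfin t)
        (by exact ENNReal.add_ne_top.mpr ⟨hMfin s, ENNReal.ofReal_ne_top⟩) |>.mpr h2
      rwa [ENNReal.toReal_add (hMfin s) ENNReal.ofReal_ne_top,
        ENNReal.toReal_ofReal (by linarith)] at this
    have hMfull : ∀ s t : ℝ, a ≤ s → s ≤ t → Ioc s t ⊆ O → M s + (t - s) ≤ M t := by
      intro s t has hst hsub
      have hdisj : Disjoint (O ∩ Ioc a s) (Ioc s t) := by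
        refine Set.disjoint_left.mpr ?_
        rintro x ⟨-, -, hx2⟩ ⟨hx3, -⟩
        exact absurd hx2 (not_le.mpr hx3)
      have hsub2 : (O ∩ Ioc a s) ∪ Ioc s t ⊆ O ∩ Ioc a t := by
        rintro x (⟨h1, h2⟩ | hx)
        · exact ⟨h1, h2.1, h2.2.trans hst⟩
        · exact ⟨hsub hx, lt_of_le_of_lt has hx.1, hx.2⟩
      have h2 : volume (O ∩ Ioc a s) + ENNReal.ofReal (t - s) ≤ volume (O ∩ Ioc a t) := by
        rw [← Real.volume_Ioc (a := s) (b := t), ← measure_union hdisj measurableSet_Ioc]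
        exact measure_mono hsub2
      have := ENNReal.toReal_le_toReal
        (by exact ENNReal.add_ne_top.mpr ⟨hMfin s, ENNReal.ofReal_ne_top⟩) (hMfin t) |>.mpr h2
      rwa [ENNReal.toReal_add (hMfin s) ENNReal.ofReal_ne_top,
        ENNReal.toReal_ofReal (by linarith)] at this
    have hMcont : Continuous M := by
      have : LipschitzWith 1 M := by
        refine LipschitzWith.of_dist_le_mul ?_
        intro s t
        rw [NNReal.coe_one, one_mul, Real.dist_eq, Real.dist_eq]
        rcases le_total s t with hst | hst
        · rw [abs_of_nonpos (by linarith [hMmono s t hst]), abs_of_nonpos (by linarith)]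
          linarith [hMadd s t hst]
        · rw [abs_of_nonneg (by linarith [hMmono t s hst]), abs_of_nonneg (by linarith)]
          linarith [hMadd t s hst]
      exact this.continuous
    have hMb : M b ≤ ε := ENNReal.toReal_le_of_le_ofReal hε.le
      ((measure_mono inter_subset_left).trans hOvol.le)
    -- the creeping set
    set C' : ℝ := (K'' : ℝ) + K + ε with hC'
    have hC'nn : (0:ℝ) ≤ C' := by positivity
    set S : Set ℝ := {t ∈ Icc a b | ‖g t - g a‖ ≤ (K + ε) * (t - a) + C' * M t} with hS
    have haS : a ∈ S := by
      refine ⟨⟨le_refl a, hab⟩, ?_⟩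
      simp [hMa]
    have hSbdd : BddAbove S := BddAbove.mono (fun t ht => ht.1) (bddAbove_Icc)
    have hScl : IsClosed S := by
      have hgc : ContinuousOn g (Icc a b) := hg.continuousOn
      have hcont : ContinuousOn (fun t => ‖g t - g a‖ - ((K + ε) * (t - a) + C' * M t)) (Icc a b) := by
        refine ContinuousOn.sub ?_ (Continuous.continuousOn (by continuity))
        exact (hgc.sub continuousOn_const).norm
      have : S = Icc a b ∩ (fun t => ‖g t - g a‖ - ((K + ε) * (t - a) + C' * M t)) ⁻¹' (Iic 0) := by
        ext t
        simp only [hS, mem_sep_iff, mem_inter_iff, mem_preimage, mem_Iic]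
        constructor
        · rintro ⟨h1, h2⟩; exact ⟨h1, by linarith⟩
        · rintro ⟨h1, h2⟩; exact ⟨h1, by linarith⟩
      rw [this]
      exact hcont.preimage_isClosed_of_isClosed isClosed_Icc isClosed_Iic
    set c : ℝ := sSup S with hc
    have hcS : c ∈ S := hScl.csSup_mem ⟨a, haS⟩ hSbdd
    have hcb : c ≤ b := hcS.1.2
    have hca : a ≤ c := hcS.1.1
    -- show c = b
    have hcbeq : c = b := by
      by_contra hne
      have hclt : c < b := lt_of_le_of_ne hcb hne
      -- helper to derive the contradiction
      have step : ∀ t', t' ∈ S → c < t' → False := by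
        intro t' ht' hct'
        exact absurd (le_csSup hSbdd ht') (not_le.mpr hct')
      by_cases hcO : c ∈ O
      · -- c is in the open set O
        obtain ⟨ρ, hρ, hball⟩ := Metric.isOpen_iff.mp hOopen c hcO
        set t' : ℝ := min b (c + ρ/2) with ht'
        have hct' : c < t' := lt_min hclt (by linarith)
        have ht'b : t' ≤ b := min_le_left _ _
        have ht'Icc : t' ∈ Icc a b := ⟨le_trans hca hct'.le, ht'b⟩
        have hsubO : Ioc c t' ⊆ O := by
          intro x hx
          apply hball
          rw [Real.ball_eq_Ioo]
          constructor
          · linarith [hx.1]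
          · have : x ≤ c + ρ/2 := le_trans hx.2 (min_le_right _ _)
            linarith
        have hMc : M c + (t' - c) ≤ M t' := hMfull c t' hca hct'.le hsubO
        have hgl : ‖g t' - g c‖ ≤ (K'' : ℝ) * (t' - c) := by
          have := hg.dist_le_mul t' ht'Icc c ⟨hca, hcb⟩
          rw [dist_eq_norm, Real.dist_eq, abs_of_nonneg (by linarith)] at this
          exact this
        refine step t' ⟨ht'Icc, ?_⟩ hct'
        have h1 : ‖g t' - g a‖ ≤ ‖g t' - g c‖ + ‖g c - g a‖ := by
          have : g t' - g a = (g t' - g c) + (g c - g a) := by abel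
          rw [this]; exact norm_add_le _ _
        have h2 := hcS.2
        have hKK : (K'' : ℝ) ≤ C' := by rw [hC']; linarith
        calc ‖g t' - g a‖ ≤ (K'' : ℝ) * (t' - c) + ((K + ε) * (c - a) + C' * M c) := by
              linarith
          _ ≤ (K + ε) * (t' - a) + C' * M t' := by
              have e1 : (K + ε) * (c - a) ≤ (K + ε) * (t' - a) := by nlinarith
              have e2 : (K'':ℝ) * (t' - c) ≤ C' * (t' - c) := by nlinarith
              nlinarith
      · -- c is a point of differentiability
        have hcN' : c ∉ N' := fun hc' => hcO (hNO hc')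
        have hcab : c ∈ Ioo a b := by
          rcases eq_or_lt_of_le hca with heq | hlt
          · exfalso; apply hcN'; right; left; exact heq.symm
          · exact ⟨hlt, hclt⟩
        have hgood : ∃ d, HasDerivAt g d c ∧ ‖d‖ ≤ K := by
          by_contra hbad
          exact hcN' (Or.inl ⟨hbad, hcab⟩)
        obtain ⟨d, hder, hdK⟩ := hgood
        have hlo := (hasDerivAt_iff_isLittleO.mp hder).def hε
        rw [Filter.eventually_iff_exists_mem] at hlo
        obtain ⟨V, hV, hVprop⟩ := hlo
        obtain ⟨ρ, hρ, hball⟩ := Metric.mem_nhds_iff.mp hV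
        set t' : ℝ := min b (c + ρ/2) with ht'
        have hct' : c < t' := lt_min hclt (by linarith)
        have ht'b : t' ≤ b := min_le_left _ _
        have ht'Icc : t' ∈ Icc a b := ⟨le_trans hca hct'.le, ht'b⟩
        have ht'V : t' ∈ V := by
          apply hball
          rw [Real.ball_eq_Ioo]
          constructor
          · linarith
          · have : t' ≤ c + ρ/2 := min_le_right _ _
            linarith
        have hest := hVprop t' ht'V
        have hgl : ‖g t' - g c‖ ≤ (K + ε) * (t' - c) := by
          have h1 : ‖g t' - g c‖ ≤ ‖(t' - c) • d‖ + ‖g t' - g c - (t' - c) • d‖ :=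
            (norm_le_insert ((t' - c) • d) (g t' - g c)).trans
              (by rw [norm_sub_rev])
          have h2 : ‖(t' - c) • d‖ ≤ (t' - c) * K := by
            rw [norm_smul, Real.norm_eq_abs, abs_of_nonneg (by linarith)]
            exact mul_le_mul_of_nonneg_left hdK (by linarith)
          have h3 : ‖t' - c‖ = t' - c := by
            rw [Real.norm_eq_abs, abs_of_nonneg (by linarith)]
          rw [h3] at hest
          nlinarith
        refine step t' ⟨ht'Icc, ?_⟩ hct'
        have h1 : ‖g t' - g a‖ ≤ ‖g t' - g c‖ + ‖g c - g a‖ := by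
          have : g t' - g a = (g t' - g c) + (g c - g a) := by abel
          rw [this]; exact norm_add_le _ _
        have h2 := hcS.2
        have hMm : M c ≤ M t' := hMmono c t' hct'.le
        calc ‖g t' - g a‖ ≤ (K + ε) * (t' - c) + ((K + ε) * (c - a) + C' * M c) := by linarith
          _ ≤ (K + ε) * (t' - a) + C' * M t' := by nlinarith
    -- conclude
    have hfin := hcS.2
    rw [hcbeq] at hfin
    have : C' * M b ≤ C' * ε := mul_le_mul_of_nonneg_left hMb hC'nn
    calc ‖g b - g a‖ ≤ (K + ε) * (b - a) + C' * M b := hfin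
      _ ≤ K * (b - a) + ε * C := by
          rw [hC, hC']
          nlinarith [K''.coe_nonneg]
  -- ε-limit
  refine le_of_forall_pos_le_add ?_
  intro δ hδ
  have hε : 0 < min 1 (δ / C) := lt_min one_pos (div_pos hδ hCpos)
  calc ‖g b - g a‖ ≤ K * (b - a) + (min 1 (δ / C)) * C := main _ hε (min_le_left _ _)
    _ ≤ K * (b - a) + δ := by
        have : (min 1 (δ / C)) * C ≤ (δ / C) * C := by
          apply mul_le_mul_of_nonneg_right (min_le_right _ _) hCpos.le
        rw [div_mul_cancel₀ _ hCpos.ne'] at this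
        linarith

/-- A Lipschitz function on a ball whose (total) derivative exists a.e. with norm `≤ K`
is `K`-Lipschitz on the ball. -/
theorem lipOnBall (w : E3 → E3) (c : E3) (r : ℝ) (K'' : ℝ≥0) (K : ℝ) (hK : 0 ≤ K)
    (hw : LipschitzOnWith K'' w (Metric.ball c r))
    (hae : ∀ᵐ p ∂(volume.restrict (Metric.ball c r)),
      DifferentiableAt ℝ w p ∧ ‖fderiv ℝ w p‖ ≤ K) :
    ∀ p ∈ Metric.ball c r, ∀ q ∈ Metric.ball c r, ‖w p - w q‖ ≤ K * ‖p - q‖ := by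
  intro p hp q hq
  rcases eq_or_ne q p with rfl | hne
  · simp [sub_self]
  set d : ℝ := ‖q - p‖ with hd
  have hdpos : 0 < d := by rw [hd]; simpa using sub_ne_zero.mpr hne
  set e : E3 := d⁻¹ • (q - p) with he
  have hde : d • e = q - p := by rw [he, smul_smul, mul_inv_cancel₀ hdpos.ne', one_smul]
  have hne1 : ‖e‖ = 1 := by
    rw [he, norm_smul, norm_inv, Real.norm_eq_abs, abs_of_pos hdpos, ← hd,
      inv_mul_cancel₀ hdpos.ne']
  -- the bad set N is null and measurable
  set N : Set E3 := Metric.ball c r ∩ {x | ¬ (DifferentiableAt ℝ w x ∧ ‖fderiv ℝ w x‖ ≤ K)}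
    with hNdef
  have hNmeas : MeasurableSet N := by
    have hDmeas : MeasurableSet {x : E3 | DifferentiableAt ℝ w x} :=
      measurableSet_of_differentiableAt ℝ w
    have hBmeas : MeasurableSet ((fderiv ℝ w) ⁻¹' {L : E3 →L[ℝ] E3 | ‖L‖ ≤ K}) :=
      (measurable_fderiv ℝ w) ((isClosed_le continuous_norm continuous_const).measurableSet)
    have : {x : E3 | ¬ (DifferentiableAt ℝ w x ∧ ‖fderiv ℝ w x‖ ≤ K)}
        = ({x : E3 | DifferentiableAt ℝ w x} ∩ (fderiv ℝ w) ⁻¹' {L : E3 →L[ℝ] E3 | ‖L‖ ≤ K})ᶜ := by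
      ext x; simp [not_and_or, mem_setOf_eq]
    rw [hNdef, this]
    exact measurableSet_ball.inter (hDmeas.inter hBmeas).compl
  have hNnull : volume N = 0 := by
    have h0 := ae_iff.mp hae
    rw [Measure.restrict_apply' measurableSet_ball] at h0
    rw [hNdef, inter_comm]
    exact h0
  -- Fubini: for a.e. shift `v`, the line `t ↦ v + t e` misses `N` a.e.
  have hfub : ∀ᵐ v ∂(volume : Measure E3), volume {t : ℝ | v + t • e ∈ N} = 0 := by
    set L : ℝ × E3 → E3 := fun tv => tv.2 + tv.1 • e with hL
    have hLmeas : Measurable L :=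
      (continuous_snd.add (continuous_fst.smul continuous_const)).measurable
    set s' : Set (ℝ × E3) := L ⁻¹' N with hs'
    have hs'meas : MeasurableSet s' := hLmeas hNmeas
    have hs'null : ((volume : Measure ℝ).prod (volume : Measure E3)) s' = 0 := by
      rw [Measure.measure_prod_null hs'meas]
      refine Filter.Eventually.of_forall (fun t => ?_)
      have hsec : (Prod.mk t ⁻¹' s') = (fun v : E3 => v + t • e) ⁻¹' N := rfl
      show volume (Prod.mk t ⁻¹' s') = 0
      rw [hsec, measure_preimage_add_right (volume : Measure E3) (t • e) N]
      exact hNnull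
    set s : Set (E3 × ℝ) := Prod.swap ⁻¹' s' with hs
    have hsmeas : MeasurableSet s := measurable_swap hs'meas
    have hsnull : ((volume : Measure E3).prod (volume : Measure ℝ)) s = 0 := by
      have := (Measure.measurePreserving_swap (μ := (volume : Measure E3))
        (ν := (volume : Measure ℝ))).measure_preimage hs'meas.nullMeasurableSet
      rw [hs, this, hs'null]
    have := (Measure.measure_prod_null hsmeas).mp hsnull
    filter_upwards [this] with v hv
    have : (fun t : ℝ => v + t • e) ⁻¹' N = Prod.mk v ⁻¹' s := rfl
    show volume {t : ℝ | v + t • e ∈ N} = 0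
    rw [show {t : ℝ | v + t • e ∈ N} = Prod.mk v ⁻¹' s from rfl]
    exact hv
  -- margin
  set r₁ : ℝ := max (dist p c) (dist q c) with hr₁
  have hr₁r : r₁ < r := max_lt hp hq
  have hr₁nn : 0 ≤ r₁ := le_max_of_le_left dist_nonneg
  -- ε-argument
  refine le_of_forall_pos_le_add (fun η hη => ?_)
  set δ : ℝ := min ((r - r₁)/2) (η/(2*K''+1)) with hδdef
  have hδpos : 0 < δ := by
    apply lt_min
    · linarith
    · positivity
  -- choose a good shift v near p
  have hball : ∃ v ∈ Metric.ball p δ, volume {t : ℝ | v + t • e ∈ N} = 0 := by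
    by_contra hcon
    push_neg at hcon
    have hsub : Metric.ball p δ ⊆ {v : E3 | ¬ volume {t : ℝ | v + t • e ∈ N} = 0} :=
      fun v hv => hcon v hv
    have h1 : volume (Metric.ball p δ) = 0 :=
      measure_mono_null hsub (ae_iff.mp hfub)
    exact absurd h1 (Metric.measure_ball_pos volume p hδpos).ne'
  obtain ⟨v, hvδ, hvgood⟩ := hball
  have hvp : ‖v - p‖ < δ := by rw [← dist_eq_norm]; exact Metric.mem_ball.mp hvδ
  -- all points of the shifted chord are in the ball
  have hchord : ∀ t ∈ Icc (0:ℝ) d, v + t • e ∈ Metric.ball c r := by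
    intro t ht
    have hseg : ‖p + t • e - c‖ ≤ r₁ := by
      have hid : p + t • e - c = (1 - t/d) • (p - c) + (t/d) • (q - c) := by
        have h1 : (t/d) • (q - p) = t • e := by
          rw [← hde, smul_smul, div_mul_cancel₀ _ hdpos.ne']
        rw [← h1]
        module
      rw [hid]
      have ht1 : 0 ≤ t/d := div_nonneg ht.1 hdpos.le
      have ht2 : t/d ≤ 1 := (div_le_one hdpos).mpr ht.2
      calc ‖(1 - t/d) • (p - c) + (t/d) • (q - c)‖
          ≤ ‖(1 - t/d) • (p - c)‖ + ‖(t/d) • (q - c)‖ := norm_add_le _ _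
        _ = (1 - t/d) * ‖p - c‖ + (t/d) * ‖q - c‖ := by
            rw [norm_smul, norm_smul, Real.norm_eq_abs, Real.norm_eq_abs,
              abs_of_nonneg (by linarith), abs_of_nonneg ht1]
        _ ≤ (1 - t/d) * r₁ + (t/d) * r₁ := by
            have e1 : ‖p - c‖ ≤ r₁ := by rw [← dist_eq_norm]; exact le_max_left _ _
            have e2 : ‖q - c‖ ≤ r₁ := by rw [← dist_eq_norm]; exact le_max_right _ _
            have : (0:ℝ) ≤ 1 - t/d := by linarith
            nlinarith
        _ = r₁ := by ring
    have : dist (v + t • e) c ≤ ‖v - p‖ + ‖p + t • e - c‖ := by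
      rw [dist_eq_norm]
      have hid2 : v + t • e - c = (v - p) + (p + t • e - c) := by abel
      rw [hid2]
      exact norm_add_le _ _
    have hδr : δ ≤ (r - r₁)/2 := min_le_left _ _
    rw [Metric.mem_ball]
    calc dist (v + t • e) c ≤ ‖v - p‖ + ‖p + t • e - c‖ := this
      _ < δ + r₁ := by linarith
      _ < r := by linarith
  -- the 1-D function along the chord
  set g : ℝ → E3 := fun t => w (v + t • e) with hg
  have hglip : LipschitzOnWith K'' g (Icc 0 d) := by
    rw [lipschitzOnWith_iff_dist_le_mul]
    intro t ht t' ht'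
    have h1 := hw.dist_le_mul _ (hchord t ht) _ (hchord t' ht')
    calc dist (g t) (g t') ≤ K'' * dist (v + t • e) (v + t' • e) := h1
      _ = K'' * dist t t' := by
          rw [dist_eq_norm, dist_eq_norm]
          have : v + t • e - (v + t' • e) = (t - t') • e := by
            rw [sub_smul]; abel
          rw [this, norm_smul, hne1, mul_one, Real.norm_eq_abs]
  have hgderiv : ∀ᵐ t ∂(volume.restrict (Ioo 0 d)), ∃ dd, HasDerivAt g dd t ∧ ‖dd‖ ≤ K := by
    have h1 : ∀ᵐ t ∂(volume : Measure ℝ), v + t • e ∉ N := by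
      rw [ae_iff]
      push_neg
      simpa using hvgood
    have h2 := ae_restrict_of_ae (μ := (volume : Measure ℝ)) (s := Ioo 0 d) h1
    have h3 : ∀ᵐ t ∂(volume.restrict (Ioo 0 d)), t ∈ Ioo 0 d :=
      ae_restrict_mem measurableSet_Ioo
    filter_upwards [h2, h3] with t htN htI
    have hmem : v + t • e ∈ Metric.ball c r := hchord t ⟨htI.1.le, htI.2.le⟩
    have hprop : DifferentiableAt ℝ w (v + t • e) ∧ ‖fderiv ℝ w (v + t • e)‖ ≤ K := by
      by_contra hbad
      exact htN ⟨hmem, hbad⟩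
    have hline : HasDerivAt (fun t : ℝ => v + t • e) e t := by
      have h4 : HasDerivAt (fun t : ℝ => t • e) ((1:ℝ) • e) t := (hasDerivAt_id t).smul_const e
      rw [one_smul] at h4
      exact h4.const_add v
    refine ⟨fderiv ℝ w (v + t • e) e, ?_, ?_⟩
    · exact (hprop.1.hasFDerivAt.comp_hasDerivAt t hline)
    · calc ‖fderiv ℝ w (v + t • e) e‖ ≤ ‖fderiv ℝ w (v + t • e)‖ * ‖e‖ :=
            ContinuousLinearMap.le_opNorm _ _
        _ ≤ K := by rw [hne1, mul_one]; exact hprop.2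
  have hmain := lip1d g 0 d hdpos.le K'' hglip K hK hgderiv
  rw [sub_zero] at hmain
  -- conclude
  have hv0 : v ∈ Metric.ball c r := by simpa using hchord 0 ⟨le_refl 0, hdpos.le⟩
  have hvd : v + d • e ∈ Metric.ball c r := hchord d ⟨hdpos.le, le_refl d⟩
  have hqd : ‖v + d • e - q‖ < δ := by
    have : v + d • e - q = v - p := by rw [hde]; abel
    rw [this]; exact hvp
  have e1 : ‖w p - w v‖ ≤ K'' * δ := by
    have := hw.dist_le_mul p hp v hv0
    rw [dist_eq_norm, dist_eq_norm] at this
    calc ‖w p - w v‖ ≤ K'' * ‖p - v‖ := this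
      _ ≤ K'' * δ := by
          have : ‖p - v‖ < δ := by rw [norm_sub_rev]; exact hvp
          nlinarith [K''.coe_nonneg]
  have e2 : ‖w (v + d • e) - w q‖ ≤ K'' * δ := by
    have := hw.dist_le_mul (v + d • e) hvd q hq
    rw [dist_eq_norm] at this
    calc ‖w (v + d • e) - w q‖ ≤ K'' * ‖v + d • e - q‖ := this
      _ ≤ K'' * δ := by nlinarith [K''.coe_nonneg, hqd]
  have e3 : ‖w v - w (v + d • e)‖ ≤ K * d := by
    have hg0 : g 0 = w v := by rw [hg]; simp
    have hgd : g d = w (v + d • e) := rfl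
    rw [norm_sub_rev, ← hgd, ← hg0]
    exact hmain
  have hsplit : w p - w q = (w p - w v) + (w v - w (v + d • e)) + (w (v + d • e) - w q) := by
    abel
  have hδη : 2 * K'' * δ ≤ η := by
    have h5 : δ ≤ η/(2*K''+1) := min_le_right _ _
    have h6 : (0:ℝ) ≤ K'' := K''.coe_nonneg
    have h7 : δ * (2*K''+1) ≤ η := by
      rw [← le_div_iff₀ (by linarith : (0:ℝ) < 2*K''+1)]
      exact h5
    have h8 : δ * (2*↑K''+1) = 2*↑K''*δ + δ := by ring
    linarith [hδpos.le]
  have hpq : ‖p - q‖ = d := by rw [hd, norm_sub_rev]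
  calc ‖w p - w q‖ ≤ ‖w p - w v‖ + ‖w v - w (v + d • e)‖ + ‖w (v + d • e) - w q‖ := by
        rw [hsplit]; exact norm_add₃_le
    _ ≤ K'' * δ + K * d + K'' * δ := by linarith
    _ ≤ K * ‖p - q‖ + η := by rw [hpq]; linarith

/-- A function that is locally constant (via balls) on `U` is constant on preconnected
subsets of `U`. -/
theorem constOn (w : E3 → E3) (U : Set E3)
    (hloc : ∀ p ∈ U, ∃ ρ > 0, ∀ q ∈ Metric.ball p ρ, w q = w p)
    (S : Set E3) (hS : IsPreconnected S) (hSU : S ⊆ U)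
    {x y : E3} (hx : x ∈ S) (hy : y ∈ S) : w x = w y := by
  by_contra hne
  have hρ : ∀ p : E3, ∃ ρ : ℝ, p ∈ U → (0 < ρ ∧ ∀ q ∈ Metric.ball p ρ, w q = w p) := by
    intro p
    by_cases hp : p ∈ U
    · obtain ⟨ρ, hρ1, hρ2⟩ := hloc p hp
      exact ⟨ρ, fun _ => ⟨hρ1, hρ2⟩⟩
    · exact ⟨1, fun h => absurd h hp⟩
  choose ρ hρspec using hρ
  set u : Set E3 := ⋃ (p : E3) (_ : p ∈ S ∧ w p = w x), Metric.ball p (ρ p) with hu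
  set v' : Set E3 := ⋃ (p : E3) (_ : p ∈ S ∧ w p ≠ w x), Metric.ball p (ρ p) with hv
  have huo : IsOpen u := isOpen_iUnion (fun p => isOpen_iUnion (fun _ => Metric.isOpen_ball))
  have hvo : IsOpen v' := isOpen_iUnion (fun p => isOpen_iUnion (fun _ => Metric.isOpen_ball))
  have hcover : S ⊆ u ∪ v' := by
    intro p hpS
    have hpos := (hρspec p (hSU hpS)).1
    by_cases hwp : w p = w x
    · exact Or.inl (mem_iUnion₂.mpr ⟨p, ⟨hpS, hwp⟩, Metric.mem_ball_self hpos⟩)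
    · exact Or.inr (mem_iUnion₂.mpr ⟨p, ⟨hpS, hwp⟩, Metric.mem_ball_self hpos⟩)
  have hxu : (S ∩ u).Nonempty :=
    ⟨x, hx, mem_iUnion₂.mpr ⟨x, ⟨hx, rfl⟩, Metric.mem_ball_self (hρspec x (hSU hx)).1⟩⟩
  have hyv : (S ∩ v').Nonempty :=
    ⟨y, hy, mem_iUnion₂.mpr ⟨y, ⟨hy, fun hc => hne hc.symm⟩,
      Metric.mem_ball_self (hρspec y (hSU hy)).1⟩⟩
  obtain ⟨q, hqS, hqu, hqv⟩ := hS u v' huo hvo hcover hxu hyv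
  obtain ⟨p1, hp1, hq1⟩ := mem_iUnion₂.mp hqu
  obtain ⟨p2, hp2, hq2⟩ := mem_iUnion₂.mp hqv
  have e1 : w q = w p1 := (hρspec p1 (hSU hp1.1)).2 q hq1
  have e2 : w q = w p2 := (hρspec p2 (hSU hp2.1)).2 q hq2
  exact hp2.2 (by rw [← e2, e1, hp1.2])

theorem dot3_inner (x y : E3) : dot3 x y = (inner ℝ x y) := by
  rw [dot3, PiLp.inner_apply]
  apply Finset.sum_congr rfl
  intro i _
  rw [RCLike.inner_apply, starRingEnd_apply, star_trivial, mul_comm]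

theorem dot3_self (n : E3) (hn : ‖n‖ = 1) : dot3 n n = 1 := by
  rw [dot3_inner, real_inner_self_eq_norm_sq, hn, one_pow]

theorem dot3_add_smul (x n : E3) (hn : ‖n‖ = 1) (c : ℝ) :
    dot3 (x + c • n) n = dot3 x n + c := by
  rw [dot3_inner, inner_add_left, real_inner_smul_left, ← dot3_inner, ← dot3_inner,
    dot3_self n hn, mul_one]

theorem dot3_abs_le (v n : E3) (hn : ‖n‖ = 1) : |dot3 v n| ≤ ‖v‖ := by
  rw [dot3_inner]
  calc |(inner ℝ v n)| ≤ ‖v‖ * ‖n‖ := abs_real_inner_le_norm v n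
    _ = ‖v‖ := by rw [hn, mul_one]

theorem dot3_diff_le (x y n : E3) (hn : ‖n‖ = 1) : |dot3 x n - dot3 y n| ≤ ‖x - y‖ := by
  have : dot3 x n - dot3 y n = dot3 (x - y) n := by
    rw [dot3_inner, dot3_inner, dot3_inner, ← inner_sub_left]
  rw [this]
  exact dot3_abs_le _ n hn

theorem dot3_cont (n : E3) : Continuous (fun x : E3 => dot3 x n) := by
  have : (fun x : E3 => dot3 x n) = fun x : E3 => (inner ℝ x n) := by
    ext x; exact dot3_inner x n
  rw [this]
  exact Continuous.inner continuous_id continuous_const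

theorem hyperplane_null (n : E3) (hn : ‖n‖ = 1) (c : ℝ) :
    volume {x : E3 | dot3 x n = c} = 0 := by
  set ℓ : E3 →ₗ[ℝ] ℝ :=
    { toFun := fun x => dot3 x n
      map_add' := by
        intro a b
        show dot3 (a + b) n = dot3 a n + dot3 b n
        rw [dot3_inner, dot3_inner, dot3_inner, inner_add_left]
      map_smul' := by
        intro m a
        show dot3 (m • a) n = m • dot3 a n
        rw [dot3_inner, dot3_inner, real_inner_smul_left]
        rfl } with hℓ
  have hker : LinearMap.ker ℓ ≠ ⊤ := by
    intro htop
    have : ℓ n = 0 := by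
      have : n ∈ LinearMap.ker ℓ := by rw [htop]; trivial
      exact LinearMap.mem_ker.mp this
    rw [show ℓ n = dot3 n n from rfl, dot3_self n hn] at this
    norm_num at this
  have hnull : volume ((LinearMap.ker ℓ : Submodule ℝ E3) : Set E3) = 0 :=
    Measure.addHaar_submodule volume _ hker
  have hset : {x : E3 | dot3 x n = c} =
      (fun x : E3 => x + (-c) • n) ⁻¹' ((LinearMap.ker ℓ : Submodule ℝ E3) : Set E3) := by
    ext x
    simp only [mem_setOf_eq, mem_preimage, SetLike.mem_coe, LinearMap.mem_ker]
    rw [show ℓ (x + (-c) • n) = dot3 (x + (-c) • n) n from rfl, dot3_add_smul x n hn (-c)]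
    constructor
    · intro h; rw [h]; ring
    · intro h; linarith
  rw [hset, measure_preimage_add_right (volume : Measure E3) ((-c) • n) _]
  exact hnull

theorem fderiv_bound (Ω : Set E3) (hΩo : IsOpen Ω) (f : E3 → E3) (K : ℝ≥0)
    (hf : LipschitzOnWith K f Ω) : ∀ x ∈ Ω, ‖fderiv ℝ f x‖ ≤ K := by
  intro x hx
  by_cases hd : DifferentiableAt ℝ f x
  · exact hd.hasFDerivAt.le_of_lipschitzOn (hΩo.mem_nhds hx) hf
  · rw [fderiv_zero_of_not_differentiableAt hd]
    simp

theorem rade (Ω : Set E3) (hΩo : IsOpen Ω) (f : E3 → E3) (K : ℝ≥0)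
    (hf : LipschitzOnWith K f Ω) :
    ∀ᵐ x ∂(volume : Measure E3), x ∈ Ω → DifferentiableAt ℝ f x := by
  filter_upwards [hf.ae_differentiableWithinAt_of_mem] with x hx hxΩ
  exact (hx hxΩ).differentiableAt (hΩo.mem_nhds hxΩ)

theorem lipsub (f g : E3 → E3) (s : Set E3) (Kf Kg : ℝ≥0) (hf : LipschitzOnWith Kf f s)
    (hg : LipschitzOnWith Kg g s) : LipschitzOnWith (Kf + Kg) (fun x => f x - g x) s := by
  rw [lipschitzOnWith_iff_dist_le_mul]
  intro a ha b hb
  have h1 := hf.dist_le_mul a ha b hb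
  have h2 := hg.dist_le_mul a ha b hb
  rw [dist_eq_norm] at h1 h2 ⊢
  have : f a - g a - (f b - g b) = (f a - f b) - (g a - g b) := by abel
  rw [this]
  calc ‖(f a - f b) - (g a - g b)‖ ≤ ‖f a - f b‖ + ‖g a - g b‖ := norm_sub_le _ _
    _ ≤ Kf * dist a b + Kg * dist a b := add_le_add h1 h2
    _ = ↑(Kf + Kg) * dist a b := by push_cast; ring

theorem coord_le (v : E3) (i : Fin 3) : |v i| ≤ ‖v‖ := by
  rw [EuclideanSpace.norm_eq]
  rw [show |v i| = Real.sqrt (|v i| ^ 2) from (Real.sqrt_sq (abs_nonneg _)).symm]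
  apply Real.sqrt_le_sqrt
  rw [sq_abs]
  have : v i ^ 2 = ‖v i‖ ^ 2 := by rw [Real.norm_eq_abs, sq_abs]
  rw [this]
  exact Finset.single_le_sum (f := fun j => ‖v j‖ ^ 2)
    (fun j _ => sq_nonneg _) (Finset.mem_univ i)

theorem locToGlob (g : ℝ → E3) (a b : ℝ) (hab : a ≤ b) (α β : ℝ) (K : ℝ) (hK : 0 ≤ K)
    (haI : a ∈ Ioo α β) (hbI : b ∈ Ioo α β)
    (hloc : ∀ s ∈ Ioo α β, ∃ ρ > 0, ∀ s₁ ∈ Metric.ball s ρ, ∀ s₂ ∈ Metric.ball s ρ,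
      ‖g s₁ - g s₂‖ ≤ K * |s₁ - s₂|) :
    ‖g b - g a‖ ≤ K * (b - a) := by
  have hIcc : Icc a b ⊆ Ioo α β := fun t ht =>
    ⟨lt_of_lt_of_le haI.1 ht.1, lt_of_le_of_lt ht.2 hbI.2⟩
  have hcont : ContinuousOn g (Icc a b) := by
    intro t ht
    obtain ⟨ρ, hρpos, hρ⟩ := hloc t (hIcc ht)
    have hlip : LipschitzOnWith (Real.toNNReal K) g (Metric.ball t ρ) := by
      rw [lipschitzOnWith_iff_dist_le_mul]
      intro u hu u' hu'
      rw [dist_eq_norm, Real.dist_eq, Real.coe_toNNReal _ hK]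
      exact hρ u hu u' hu'
    exact (hlip.continuousOn.continuousAt
      (Metric.ball_mem_nhds t hρpos)).continuousWithinAt
  set S : Set ℝ := {t ∈ Icc a b | ‖g t - g a‖ ≤ K * (t - a)} with hS
  have haS : a ∈ S := ⟨⟨le_refl a, hab⟩, by simp⟩
  have hSbdd : BddAbove S := BddAbove.mono (fun t ht => ht.1) bddAbove_Icc
  have hScl : IsClosed S := by
    have hc2 : ContinuousOn (fun t => ‖g t - g a‖ - K * (t - a)) (Icc a b) :=
      ContinuousOn.sub (hcont.sub continuousOn_const).norm
        (Continuous.continuousOn (by continuity))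
    have : S = Icc a b ∩ (fun t => ‖g t - g a‖ - K * (t - a)) ⁻¹' (Iic 0) := by
      ext t
      simp only [hS, mem_sep_iff, mem_inter_iff, mem_preimage, mem_Iic]
      constructor
      · rintro ⟨h1, h2⟩; exact ⟨h1, by linarith⟩
      · rintro ⟨h1, h2⟩; exact ⟨h1, by linarith⟩
    rw [this]
    exact hc2.preimage_isClosed_of_isClosed isClosed_Icc isClosed_Iic
  set c : ℝ := sSup S with hc
  have hcS : c ∈ S := hScl.csSup_mem ⟨a, haS⟩ hSbdd
  have hceq : c = b := by
    by_contra hne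
    have hclt : c < b := lt_of_le_of_ne hcS.1.2 hne
    obtain ⟨ρ, hρpos, hρ⟩ := hloc c (hIcc hcS.1)
    set t' : ℝ := min b (c + ρ/2) with ht'
    have hct' : c < t' := lt_min hclt (by linarith)
    have ht'Icc : t' ∈ Icc a b := ⟨le_trans hcS.1.1 hct'.le, min_le_left _ _⟩
    have hcball : c ∈ Metric.ball c ρ := Metric.mem_ball_self hρpos
    have ht'ball : t' ∈ Metric.ball c ρ := by
      rw [Metric.mem_ball, Real.dist_eq, abs_of_nonneg (by linarith)]
      have : t' ≤ c + ρ/2 := min_le_right _ _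
      linarith
    have hstep : ‖g t' - g c‖ ≤ K * (t' - c) := by
      have := hρ t' ht'ball c hcball
      rwa [abs_of_nonneg (by linarith)] at this
    have ht'S : t' ∈ S := by
      refine ⟨ht'Icc, ?_⟩
      have h1 : ‖g t' - g a‖ ≤ ‖g t' - g c‖ + ‖g c - g a‖ := by
        have : g t' - g a = (g t' - g c) + (g c - g a) := by abel
        rw [this]; exact norm_add_le _ _
      have h2 := hcS.2
      have : K * (t' - c) + K * (c - a) = K * (t' - a) := by ring
      linarith
    exact absurd (le_csSup hSbdd ht'S) (not_le.mpr hct')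
  have := hcS.2
  rwa [hceq] at this


/-- Proposition: planar Hadamard, part 2.  Under the hypotheses of the
planar moving-mask situation, if moreover `Ω ∩ {x·n = h(t)}` is connected for every
`t ∈ (0,T)`, then `z(x) = f(x·n)` for a Lipschitz `f : ℝ → ℝ³`. -/
theorem stmt1
    (Ω : Set E3) (hΩo : IsOpen Ω) (hΩb : Bornology.IsBounded Ω)
    (hΩc : IsConnected Ω) (hΩl : HasLipschitzBoundary Ω)
    (n : E3) (hn : ‖n‖ = 1)
    (T : ℝ) (hT : 0 < T)
    (h : ℝ → ℝ) (hcont : ContinuousOn h (Icc 0 T)) (hmono : MonotoneOn h (Icc 0 T))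
    (h0 : h 0 = sInf ((fun x => dot3 x n) '' Ω))
    (hTsup : h T = sSup ((fun x => dot3 x n) '' Ω))
    (z : E3 → E3) (K : ℝ≥0) (hz : LipschitzOnWith K z Ω)
    (hZ : ∀ᵐ t ∂(volume.restrict (Ioo (0:ℝ) T)),
      ∃ (Z : E3 → E3) (K' : ℝ≥0), LipschitzOnWith K' Z Ω ∧
        (∀ᵐ x ∂(volume.restrict (Ω ∩ {x : E3 | dot3 x n < h t})),
          fderiv ℝ Z x = fderiv ℝ z x) ∧
        (∀ᵐ x ∂(volume.restrict (Ω ∩ {x : E3 | h t < dot3 x n})),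
          fderiv ℝ Z x = 0))
    (hconn : ∀ t ∈ Ioo (0:ℝ) T, IsConnected (Ω ∩ {x : E3 | dot3 x n = h t})) :
    ∃ (f : ℝ → E3) (Kf : ℝ≥0), LipschitzWith Kf f ∧ ∀ x ∈ Ω, z x = f (dot3 x n) := by
  classical
  set A : Set ℝ := (fun x => dot3 x n) '' Ω with hA
  set α : ℝ := sInf A with hα
  set β : ℝ := sSup A with hβ
  obtain ⟨x₀, hx₀⟩ := hΩc.nonempty
  have hAne : A.Nonempty := ⟨dot3 x₀ n, x₀, hx₀, rfl⟩
  obtain ⟨R, hR⟩ := hΩb.subset_closedBall 0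
  have hAbdd_above : BddAbove A := by
    refine ⟨R, ?_⟩
    rintro a ⟨x, hxΩ, rfl⟩
    have h1 : ‖x‖ ≤ R := by
      have := hR hxΩ
      rwa [Metric.mem_closedBall, dist_zero_right] at this
    have := dot3_abs_le x n hn
    calc dot3 x n ≤ |dot3 x n| := le_abs_self _
      _ ≤ ‖x‖ := this
      _ ≤ R := h1
  have hAbdd_below : BddBelow A := by
    refine ⟨-R, ?_⟩
    rintro a ⟨x, hxΩ, rfl⟩
    have h1 : ‖x‖ ≤ R := by
      have := hR hxΩ
      rwa [Metric.mem_closedBall, dist_zero_right] at this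
    have := dot3_abs_le x n hn
    have h2 : -|dot3 x n| ≤ dot3 x n := neg_abs_le _
    have h3 : -R ≤ -|dot3 x n| := by
      apply neg_le_neg; exact this.trans h1
    linarith
  -- shifted points stay in balls
  have hshift : ∀ (x : E3) (c ρ : ℝ), |c| < ρ → x + c • n ∈ Metric.ball x ρ := by
    intro x c ρ hcρ
    rw [Metric.mem_ball, dist_eq_norm]
    have : x + c • n - x = c • n := by abel
    rw [this, norm_smul, Real.norm_eq_abs, hn, mul_one]
    exact hcρ
  -- strict bounds on Ω
  have hstrict : ∀ x ∈ Ω, α < dot3 x n ∧ dot3 x n < β := by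
    intro x hx
    obtain ⟨ρ, hρpos, hρ⟩ := Metric.isOpen_iff.mp hΩo x hx
    have hmem1 : x + (ρ/2) • n ∈ Ω := hρ (hshift x (ρ/2) ρ (by rw [abs_of_pos (by linarith)]; linarith))
    have hmem2 : x + (-(ρ/2)) • n ∈ Ω := hρ (hshift x (-(ρ/2)) ρ (by rw [abs_of_neg (by linarith)]; linarith))
    have hv1 : dot3 (x + (ρ/2) • n) n = dot3 x n + ρ/2 := dot3_add_smul x n hn _
    have hv2 : dot3 (x + (-(ρ/2)) • n) n = dot3 x n + (-(ρ/2)) := dot3_add_smul x n hn _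
    constructor
    · have : α ≤ dot3 x n + (-(ρ/2)) := by
        rw [← hv2]; exact csInf_le hAbdd_below ⟨_, hmem2, rfl⟩
      linarith
    · have : dot3 x n + ρ/2 ≤ β := by
        rw [← hv1]; exact le_csSup hAbdd_above ⟨_, hmem1, rfl⟩
      linarith
  have hαβ : α < β := by
    have := hstrict x₀ hx₀; linarith
  -- A ⊇ Ioo α β
  have hsurj : ∀ s ∈ Ioo α β, ∃ x ∈ Ω, dot3 x n = s := by
    intro s hs
    have hconnA : IsPreconnected A :=
      (hΩc.image _ (dot3_cont n).continuousOn).isPreconnected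
    obtain ⟨a1, ha1A, ha1⟩ := (csInf_lt_iff hAbdd_below hAne).mp hs.1
    obtain ⟨a2, ha2A, ha2⟩ := (lt_csSup_iff hAbdd_above hAne).mp hs.2
    have : s ∈ A := hconnA.Icc_subset ha1A ha2A ⟨ha1.le, ha2.le⟩
    obtain ⟨x, hx, hxs⟩ := this
    exact ⟨x, hx, hxs⟩
  -- levels are attained in (0,T)
  have hlevel : ∀ s ∈ Ioo α β, ∃ t ∈ Ioo 0 T, h t = s := by
    intro s hs
    have hsIcc : s ∈ Icc (h 0) (h T) := by
      rw [h0, hTsup]; exact ⟨hs.1.le, hs.2.le⟩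
    obtain ⟨t, htIcc, hts⟩ := intermediate_value_Icc hT.le hcont hsIcc
    have ht0 : t ≠ 0 := by
      rintro rfl
      rw [hts] at h0
      rw [← h0] at hs
      exact absurd hs.1 (lt_irrefl s)
    have htT : t ≠ T := by
      rintro rfl
      rw [hts] at hTsup
      rw [← hTsup] at hs
      exact absurd hs.2 (lt_irrefl s)
    exact ⟨t, ⟨lt_of_le_of_ne htIcc.1 (Ne.symm ht0), lt_of_le_of_ne htIcc.2 htT⟩, hts⟩
  -- slices are connected
  have hslice : ∀ s ∈ Ioo α β, IsConnected (Ω ∩ {x : E3 | dot3 x n = s}) := by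
    intro s hs
    obtain ⟨t, htIoo, hts⟩ := hlevel s hs
    have := hconn t htIoo
    rwa [hts] at this
  -- good parameters are dense in levels
  have hgood : ∀ s s' : ℝ, α < s → s < s' → s' < β →
      ∃ t ∈ Ioo (0:ℝ) T, s < h t ∧ h t < s' ∧
      (∃ (Z : E3 → E3) (K' : ℝ≥0), LipschitzOnWith K' Z Ω ∧
        (∀ᵐ x ∂(volume.restrict (Ω ∩ {x : E3 | dot3 x n < h t})),
          fderiv ℝ Z x = fderiv ℝ z x) ∧
        (∀ᵐ x ∂(volume.restrict (Ω ∩ {x : E3 | h t < dot3 x n})),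
          fderiv ℝ Z x = 0)) := by
    intro s s' hs hss' hs'
    obtain ⟨t₀, ht₀, ht₀s⟩ := hlevel ((s + s')/2) ⟨by linarith, by linarith⟩
    have hcw : ContinuousWithinAt h (Icc 0 T) t₀ := hcont t₀ (Ioo_subset_Icc_self ht₀)
    have hev : h ⁻¹' (Ioo s s') ∈ nhdsWithin t₀ (Icc 0 T) := by
      apply hcw
      rw [ht₀s]
      exact Ioo_mem_nhds (by linarith) (by linarith)
    obtain ⟨U, hUopen, hU0, hUsub⟩ := mem_nhdsWithin.mp hev
    set E : Set ℝ := U ∩ Ioo 0 T with hE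
    have hEopen : IsOpen E := hUopen.inter isOpen_Ioo
    have hEx : t₀ ∈ E := ⟨hU0, ht₀⟩
    have hEpos : 0 < volume E := hEopen.measure_pos volume ⟨t₀, hEx⟩
    have hexists : ∃ t ∈ E, ∃ (Z : E3 → E3) (K' : ℝ≥0), LipschitzOnWith K' Z Ω ∧
        (∀ᵐ x ∂(volume.restrict (Ω ∩ {x : E3 | dot3 x n < h t})),
          fderiv ℝ Z x = fderiv ℝ z x) ∧
        (∀ᵐ x ∂(volume.restrict (Ω ∩ {x : E3 | h t < dot3 x n})),
          fderiv ℝ Z x = 0) := by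
      by_contra hcon
      have hnull := ae_iff.mp hZ
      have hle : volume.restrict (Ioo (0:ℝ) T) E ≤
          volume.restrict (Ioo (0:ℝ) T) {t | ¬ ∃ (Z : E3 → E3) (K' : ℝ≥0),
            LipschitzOnWith K' Z Ω ∧
            (∀ᵐ x ∂(volume.restrict (Ω ∩ {x : E3 | dot3 x n < h t})),
              fderiv ℝ Z x = fderiv ℝ z x) ∧
            (∀ᵐ x ∂(volume.restrict (Ω ∩ {x : E3 | h t < dot3 x n})),
              fderiv ℝ Z x = 0)} := by
        apply measure_mono
        intro t ht
        exact fun hex => hcon ⟨t, ht, hex⟩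
      rw [hnull] at hle
      have hres : volume.restrict (Ioo (0:ℝ) T) E = volume E := by
        rw [Measure.restrict_apply' measurableSet_Ioo, inter_eq_left.mpr inter_subset_right]
      rw [hres] at hle
      exact absurd (le_antisymm hle (zero_le)) hEpos.ne'
    obtain ⟨t, htE, hZt⟩ := hexists
    have hht : h t ∈ Ioo s s' := hUsub ⟨htE.1, Ioo_subset_Icc_self htE.2⟩
    exact ⟨t, htE.2, hht.1, hht.2, hZt⟩
  -- Rademacher and derivative bound for z
  have hzdiff := rade Ω hΩo z K hz
  have hzbound := fderiv_bound Ω hΩo z K hz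
  -- CENTRAL CLAIM
  have Cst : ∀ x ∈ Ω, ∀ y ∈ Ω, dot3 x n = dot3 y n → z x = z y := by
    intro x hx y hy hxy
    have key : ∀ η : ℝ, 0 < η → ‖z x - z y‖ ≤ η := by
      intro η hη
      obtain ⟨ρx, hρxpos, hρx⟩ := Metric.isOpen_iff.mp hΩo x hx
      obtain ⟨ρy, hρypos, hρy⟩ := Metric.isOpen_iff.mp hΩo y hy
      have hKnn : (0:ℝ) ≤ K := K.coe_nonneg
      set δ : ℝ := min (min (ρx/2) (ρy/2)) (η/(4*K+1)) with hδdef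
      have hδpos : 0 < δ := by
        apply lt_min (lt_min (by linarith) (by linarith))
        positivity
      have hδx : δ < ρx := by
        have : δ ≤ ρx/2 := le_trans (min_le_left _ _) (min_le_left _ _)
        linarith
      have hδy : δ < ρy := by
        have : δ ≤ ρy/2 := le_trans (min_le_left _ _) (min_le_right _ _)
        linarith
      have hxδ : x + δ • n ∈ Ω := hρx (hshift x δ ρx (by rwa [abs_of_pos hδpos]))
      have hyδ : y + δ • n ∈ Ω := hρy (hshift y δ ρy (by rwa [abs_of_pos hδpos]))
      have hPxδ : dot3 (x + δ • n) n = dot3 x n + δ := dot3_add_smul x n hn δ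
      have hPyδ : dot3 (y + δ • n) n = dot3 x n + δ := by
        rw [dot3_add_smul y n hn δ, hxy]
      have hsα : α < dot3 x n := (hstrict x hx).1
      have hsδβ : dot3 x n + δ < β := by
        have := (hstrict _ hxδ).2
        rwa [hPxδ] at this
      obtain ⟨t, htIoo, hht1, hht2, Z, K', hZlip, hMae, hAae⟩ :=
        hgood (dot3 x n) (dot3 x n + δ) hsα (by linarith) hsδβ
      set ΩM : Set E3 := Ω ∩ {x : E3 | dot3 x n < h t} with hΩM
      set ΩA : Set E3 := Ω ∩ {x : E3 | h t < dot3 x n} with hΩA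
      have hΩMopen : IsOpen ΩM := hΩo.inter (isOpen_lt (dot3_cont n) continuous_const)
      have hΩAopen : IsOpen ΩA := hΩo.inter (isOpen_lt continuous_const (dot3_cont n))
      have hZdiff := rade Ω hΩo Z K' hZlip
      -- (a) Z - z is locally constant on ΩM
      set w₁ : E3 → E3 := fun p => Z p - z p with hw₁
      have hw₁lip : LipschitzOnWith (K' + K) w₁ Ω := lipsub Z z Ω K' K hZlip hz
      have hw₁loc : ∀ p ∈ ΩM, ∃ ρ > 0, ∀ q ∈ Metric.ball p ρ, w₁ q = w₁ p := by
        intro p hp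
        obtain ⟨ρ, hρpos, hρsub⟩ := Metric.isOpen_iff.mp hΩMopen p hp
        refine ⟨ρ, hρpos, ?_⟩
        have hballΩ : Metric.ball p ρ ⊆ Ω := fun q hq => (hρsub hq).1
        have hae1 : ∀ᵐ q ∂(volume.restrict (Metric.ball p ρ)),
            DifferentiableAt ℝ w₁ q ∧ ‖fderiv ℝ w₁ q‖ ≤ ((0:ℝ≥0) : ℝ) := by
          filter_upwards [ae_restrict_of_ae_restrict_of_subset hρsub hMae,
            ae_restrict_of_ae_restrict_of_subset hρsub
              (ae_restrict_of_ae (μ := (volume : Measure E3)) (s := ΩM) hzdiff),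
            ae_restrict_of_ae_restrict_of_subset hρsub
              (ae_restrict_of_ae (μ := (volume : Measure E3)) (s := ΩM) hZdiff),
            ae_restrict_of_ae_restrict_of_subset hρsub
              (ae_restrict_mem (μ := (volume : Measure E3)) hΩMopen.measurableSet)]
            with q hq1 hq2 hq3 hq4
          have hqΩ : q ∈ Ω := hq4.1
          have hdz := hq2 hqΩ
          have hdZ := hq3 hqΩ
          refine ⟨hdZ.sub hdz, ?_⟩
          have : fderiv ℝ w₁ q = fderiv ℝ Z q - fderiv ℝ z q := fderiv_sub hdZ hdz
          rw [this, hq1, sub_self]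
          simp
        have hlob := lipOnBall w₁ p ρ (K' + K) ((0:ℝ≥0) : ℝ) le_rfl
          (hw₁lip.mono hballΩ) hae1
        intro q hq
        have h5 := hlob q hq p (Metric.mem_ball_self hρpos)
        rw [NNReal.coe_zero, zero_mul] at h5
        rwa [norm_le_zero_iff, sub_eq_zero] at h5
      -- (b) Z is locally constant on ΩA
      have hZloc : ∀ p ∈ ΩA, ∃ ρ > 0, ∀ q ∈ Metric.ball p ρ, Z q = Z p := by
        intro p hp
        obtain ⟨ρ, hρpos, hρsub⟩ := Metric.isOpen_iff.mp hΩAopen p hp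
        refine ⟨ρ, hρpos, ?_⟩
        have hballΩ : Metric.ball p ρ ⊆ Ω := fun q hq => (hρsub hq).1
        have hae1 : ∀ᵐ q ∂(volume.restrict (Metric.ball p ρ)),
            DifferentiableAt ℝ Z q ∧ ‖fderiv ℝ Z q‖ ≤ ((0:ℝ≥0) : ℝ) := by
          filter_upwards [ae_restrict_of_ae_restrict_of_subset hρsub hAae,
            ae_restrict_of_ae_restrict_of_subset hρsub
              (ae_restrict_of_ae (μ := (volume : Measure E3)) (s := ΩA) hZdiff),
            ae_restrict_of_ae_restrict_of_subset hρsub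
              (ae_restrict_mem (μ := (volume : Measure E3)) hΩAopen.measurableSet)]
            with q hq1 hq3 hq4
          refine ⟨hq3 hq4.1, ?_⟩
          rw [hq1]
          simp
        have hlob := lipOnBall Z p ρ K' ((0:ℝ≥0) : ℝ) le_rfl (hZlip.mono hballΩ) hae1
        intro q hq
        have h5 := hlob q hq p (Metric.mem_ball_self hρpos)
        rw [NNReal.coe_zero, zero_mul] at h5
        rwa [norm_le_zero_iff, sub_eq_zero] at h5
      -- slices
      have hsliceS := hslice (dot3 x n) ⟨hsα, by linarith⟩
      have hsliceS' := hslice (dot3 x n + δ) ⟨by linarith, hsδβ⟩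
      have hSsub : Ω ∩ {p : E3 | dot3 p n = dot3 x n} ⊆ ΩM := by
        rintro p ⟨hp1, hp2⟩
        refine ⟨hp1, ?_⟩
        rw [mem_setOf_eq] at hp2 ⊢
        rw [hp2]; exact hht1
      have hS'sub : Ω ∩ {p : E3 | dot3 p n = dot3 x n + δ} ⊆ ΩA := by
        rintro p ⟨hp1, hp2⟩
        refine ⟨hp1, ?_⟩
        rw [mem_setOf_eq] at hp2 ⊢
        rw [hp2]; exact hht2
      have E1 : w₁ x = w₁ y :=
        constOn w₁ ΩM hw₁loc _ hsliceS.isPreconnected hSsub ⟨hx, rfl⟩ ⟨hy, hxy.symm⟩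
      have E2 : Z (x + δ • n) = Z (y + δ • n) :=
        constOn Z ΩA hZloc _ hsliceS'.isPreconnected hS'sub ⟨hxδ, hPxδ⟩ ⟨hyδ, hPyδ⟩
      -- (c) global a.e. derivative bound for Z on Ω
      have hZae : volume (Ω ∩ {p : E3 | ¬ (DifferentiableAt ℝ Z p ∧ ‖fderiv ℝ Z p‖ ≤ (K:ℝ))}) = 0 := by
        have hD : volume {p : E3 | ¬ (p ∈ Ω → DifferentiableAt ℝ Z p)} = 0 := ae_iff.mp hZdiff
        have hB1 : volume ({p : E3 | ¬ fderiv ℝ Z p = fderiv ℝ z p} ∩ ΩM) = 0 := by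
          have := ae_iff.mp hMae
          rwa [Measure.restrict_apply' hΩMopen.measurableSet] at this
        have hB2 : volume ({p : E3 | ¬ fderiv ℝ Z p = 0} ∩ ΩA) = 0 := by
          have := ae_iff.mp hAae
          rwa [Measure.restrict_apply' hΩAopen.measurableSet] at this
        have hSl : volume {p : E3 | dot3 p n = h t} = 0 := hyperplane_null n hn (h t)
        have hsub : Ω ∩ {p : E3 | ¬ (DifferentiableAt ℝ Z p ∧ ‖fderiv ℝ Z p‖ ≤ (K:ℝ))} ⊆
            {p : E3 | ¬ (p ∈ Ω → DifferentiableAt ℝ Z p)} ∪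
            (({p : E3 | ¬ fderiv ℝ Z p = fderiv ℝ z p} ∩ ΩM) ∪
            (({p : E3 | ¬ fderiv ℝ Z p = 0} ∩ ΩA) ∪ {p : E3 | dot3 p n = h t})) := by
          rintro p ⟨hpΩ, hpbad⟩
          rw [mem_setOf_eq] at hpbad
          by_cases hdiff : DifferentiableAt ℝ Z p
          · rcases lt_trichotomy (dot3 p n) (h t) with hlt | heq | hgt
            · by_cases he : fderiv ℝ Z p = fderiv ℝ z p
              · exfalso
                apply hpbad
                exact ⟨hdiff, by rw [he]; exact hzbound p hpΩ⟩
              · exact Or.inr (Or.inl ⟨he, hpΩ, hlt⟩)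
            · exact Or.inr (Or.inr (Or.inr heq))
            · by_cases he : fderiv ℝ Z p = 0
              · exfalso
                apply hpbad
                refine ⟨hdiff, ?_⟩
                rw [he]
                simp [K.coe_nonneg]
              · exact Or.inr (Or.inr (Or.inl ⟨he, hpΩ, hgt⟩))
          · exact Or.inl (fun hc => hdiff (hc hpΩ))
        refine measure_mono_null hsub ?_
        refine measure_union_null hD (measure_union_null hB1 (measure_union_null hB2 hSl))
      -- K-Lipschitz estimates from x and y
      have hKest : ∀ (p : E3) (ρ : ℝ), 0 < ρ → Metric.ball p ρ ⊆ Ω → δ < ρ →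
          ‖Z p - Z (p + δ • n)‖ ≤ K * δ := by
        intro p ρ hρpos hballΩ hδρ
        have haep : ∀ᵐ q ∂(volume.restrict (Metric.ball p ρ)),
            DifferentiableAt ℝ Z q ∧ ‖fderiv ℝ Z q‖ ≤ (K:ℝ) := by
          rw [ae_iff]
          rw [Measure.restrict_apply' measurableSet_ball]
          refine measure_mono_null ?_ hZae
          rintro q ⟨hq1, hq2⟩
          exact ⟨hballΩ hq2, hq1⟩
        have hlob := lipOnBall Z p ρ K' (K:ℝ) K.coe_nonneg (hZlip.mono hballΩ) haep
        have hmem2 : p + δ • n ∈ Metric.ball p ρ := hshift p δ ρ (by rwa [abs_of_pos hδpos])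
        have h7 := hlob p (Metric.mem_ball_self hρpos) (p + δ • n) hmem2
        have h8 : ‖p - (p + δ • n)‖ = δ := by
          have : p - (p + δ • n) = -(δ • n) := by abel
          rw [this, norm_neg, norm_smul, Real.norm_eq_abs, hn, mul_one, abs_of_pos hδpos]
        rwa [h8] at h7
      have hZx := hKest x ρx hρxpos hρx hδx
      have hZy := hKest y ρy hρypos hρy hδy
      -- combine
      have hcomb : z x - z y = (Z x - Z (x + δ • n)) - (Z y - Z (y + δ • n)) := by
        have e1 : Z x - z x = Z y - z y := E1
        have e2 : Z (x + δ • n) = Z (y + δ • n) := E2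
        have e3 : (Z x - Z (x + δ • n)) - (Z y - Z (y + δ • n))
            = ((Z x - z x) - (Z y - z y)) + (Z (y + δ • n) - Z (x + δ • n)) + (z x - z y) := by
          abel
        rw [e3, e1, sub_self, e2, sub_self]
        abel
      have hnorm : ‖z x - z y‖ ≤ 2 * K * δ := by
        rw [hcomb]
        calc ‖(Z x - Z (x + δ • n)) - (Z y - Z (y + δ • n))‖
            ≤ ‖Z x - Z (x + δ • n)‖ + ‖Z y - Z (y + δ • n)‖ := norm_sub_le _ _
          _ ≤ K * δ + K * δ := add_le_add hZx hZy
          _ = 2 * K * δ := by ring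
      have hδη : 2 * K * δ ≤ η := by
        have h5 : δ ≤ η/(4*K+1) := min_le_right _ _
        have h7 : δ * (4*K+1) ≤ η := by
          rw [← le_div_iff₀ (by linarith : (0:ℝ) < 4*K+1)]
          exact h5
        nlinarith [hδpos.le]
      linarith
    have h9 : ‖z x - z y‖ ≤ 0 := by
      refine le_of_forall_pos_le_add ?_
      intro ε hε
      rw [zero_add]
      exact key ε hε
    rw [← sub_eq_zero]
    exact norm_le_zero_iff.mp h9
  -- define g
  set g : ℝ → E3 := fun s => if hs : ∃ x, x ∈ Ω ∧ dot3 x n = s then z hs.choose else 0 with hgdef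
  have hgspec : ∀ x ∈ Ω, g (dot3 x n) = z x := by
    intro x hx
    have hex : ∃ y, y ∈ Ω ∧ dot3 y n = dot3 x n := ⟨x, hx, rfl⟩
    rw [hgdef]
    simp only
    rw [dif_pos hex]
    exact Cst _ hex.choose_spec.1 x hx hex.choose_spec.2
  -- local Lipschitz estimate for g
  have hgloc : ∀ s ∈ Ioo α β, ∃ ρ > 0, ∀ s₁ ∈ Metric.ball s ρ, ∀ s₂ ∈ Metric.ball s ρ,
      ‖g s₁ - g s₂‖ ≤ K * |s₁ - s₂| := by
    intro s hs
    obtain ⟨x, hxΩ, hxs⟩ := hsurj s hs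
    obtain ⟨ρ, hρpos, hρsub⟩ := Metric.isOpen_iff.mp hΩo x hxΩ
    refine ⟨ρ, hρpos, ?_⟩
    have hmem : ∀ u ∈ Metric.ball s ρ, x + (u - s) • n ∈ Ω ∧ dot3 (x + (u - s) • n) n = u := by
      intro u hu
      rw [Metric.mem_ball, Real.dist_eq] at hu
      constructor
      · exact hρsub (hshift x (u - s) ρ hu)
      · rw [dot3_add_smul x n hn, hxs]; ring
    intro s₁ hs₁ s₂ hs₂
    have h1 := hmem s₁ hs₁
    have h2 := hmem s₂ hs₂
    have e1 : g s₁ = z (x + (s₁ - s) • n) := by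
      have := hgspec _ h1.1
      rwa [h1.2] at this
    have e2 : g s₂ = z (x + (s₂ - s) • n) := by
      have := hgspec _ h2.1
      rwa [h2.2] at this
    rw [e1, e2]
    have h3 := hz.dist_le_mul _ h1.1 _ h2.1
    rw [dist_eq_norm] at h3
    have h4 : x + (s₁ - s) • n - (x + (s₂ - s) • n) = (s₁ - s₂) • n := by
      module
    rw [dist_eq_norm, h4, norm_smul, Real.norm_eq_abs, hn, mul_one] at h3
    exact h3
  -- global Lipschitz estimate for g on the interval
  have hgint : ∀ s₁ ∈ Ioo α β, ∀ s₂ ∈ Ioo α β, ‖g s₁ - g s₂‖ ≤ K * |s₁ - s₂| := by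
    intro s₁ h₁ s₂ h₂
    rcases le_total s₁ s₂ with hle | hle
    · rw [abs_of_nonpos (by linarith), norm_sub_rev]
      have := locToGlob g s₁ s₂ hle α β K K.coe_nonneg h₁ h₂ hgloc
      calc ‖g s₂ - g s₁‖ ≤ K * (s₂ - s₁) := this
        _ = K * -(s₁ - s₂) := by ring
    · rw [abs_of_nonneg (by linarith)]
      exact locToGlob g s₂ s₁ hle α β K K.coe_nonneg h₂ h₁ hgloc
  -- extend componentwise
  have hgpi : LipschitzOnWith K (fun s (i : Fin 3) => g s i) (Ioo α β) := by
    rw [lipschitzOnWith_iff_dist_le_mul]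
    intro s₁ h₁ s₂ h₂
    rw [dist_pi_le_iff (by positivity)]
    intro i
    rw [Real.dist_eq]
    calc |g s₁ i - g s₂ i| = |(g s₁ - g s₂) i| := rfl
      _ ≤ ‖g s₁ - g s₂‖ := coord_le _ i
      _ ≤ K * |s₁ - s₂| := hgint s₁ h₁ s₂ h₂
      _ = K * dist s₁ s₂ := by rw [Real.dist_eq]
  obtain ⟨G, hGlip, hGeq⟩ := hgpi.extend_pi
  refine ⟨fun r => (WithLp.equiv 2 (Fin 3 → ℝ)).symm (G r), 2 * K, ?_, ?_⟩
  · rw [lipschitzWith_iff_dist_le_mul]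
    intro r r'
    rw [dist_eq_norm]
    have hcoord : ∀ i : Fin 3,
        ‖((WithLp.equiv 2 (Fin 3 → ℝ)).symm (G r) - (WithLp.equiv 2 (Fin 3 → ℝ)).symm (G r')) i‖
          ≤ K * dist r r' := by
      intro i
      have hri : ((WithLp.equiv 2 (Fin 3 → ℝ)).symm (G r)
          - (WithLp.equiv 2 (Fin 3 → ℝ)).symm (G r')) i = G r i - G r' i := rfl
      rw [hri, Real.norm_eq_abs, ← Real.dist_eq]
      calc dist (G r i) (G r' i) ≤ dist (G r) (G r') := dist_le_pi_dist _ _ i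
        _ ≤ K * dist r r' := hGlip.dist_le_mul r r'
    rw [EuclideanSpace.norm_eq]
    have hsum : ∑ i : Fin 3,
        ‖((WithLp.equiv 2 (Fin 3 → ℝ)).symm (G r) - (WithLp.equiv 2 (Fin 3 → ℝ)).symm (G r')) i‖ ^ 2
        ≤ ∑ _i : Fin 3, (K * dist r r') ^ 2 := by
      apply Finset.sum_le_sum
      intro i _
      have := hcoord i
      have hnn : (0:ℝ) ≤ ‖((WithLp.equiv 2 (Fin 3 → ℝ)).symm (G r)
          - (WithLp.equiv 2 (Fin 3 → ℝ)).symm (G r')) i‖ := norm_nonneg _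
      nlinarith
    have hKd : (0:ℝ) ≤ K * dist r r' := by positivity
    calc Real.sqrt (∑ i : Fin 3,
          ‖((WithLp.equiv 2 (Fin 3 → ℝ)).symm (G r) - (WithLp.equiv 2 (Fin 3 → ℝ)).symm (G r')) i‖ ^ 2)
        ≤ Real.sqrt (∑ _i : Fin 3, (K * dist r r') ^ 2) := Real.sqrt_le_sqrt hsum
      _ = Real.sqrt (3 * (K * dist r r') ^ 2) := by
          rw [Finset.sum_const, Finset.card_univ, Fintype.card_fin, nsmul_eq_mul]
          norm_num
      _ ≤ Real.sqrt (4 * (K * dist r r') ^ 2) := by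
          apply Real.sqrt_le_sqrt
          nlinarith
      _ = 2 * (K * dist r r') := by
          rw [show (4:ℝ) * (K * dist r r') ^ 2 = (2 * (K * dist r r'))^2 by ring]
          exact Real.sqrt_sq (by positivity)
      _ = ↑(2 * K) * dist r r' := by push_cast; ring
  · intro x hx
    have hPIoo : dot3 x n ∈ Ioo α β := ⟨(hstrict x hx).1, (hstrict x hx).2⟩
    have h3 : g (dot3 x n) = z x := hgspec x hx
    have h2' : G (dot3 x n) = fun i : Fin 3 => z x i := by
      have h2 := (hGeq hPIoo).symm
      rw [h2]
      funext i
      show g (dot3 x n) i = z x i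
      rw [h3]
    show z x = (WithLp.equiv 2 (Fin 3 → ℝ)).symm (G (dot3 x n))
    rw [h2']
    rfl
end
end

section
/- Let a, n ∈ ℝ³ with |n| = 1, let F := I + a ⊗ n, and let 𝔇 := det F = 1 + a·n, assumed positive. Let σ₁ ≤ σ₂ ≤ σ₃ denote the singular values of F (the square roots of the eigenvalues of FᵀF). Then σ₂ = 1, σ₁σ₃ = 𝔇 and |a| = σ₃ − σ₁. Consequently, if 0 < λ_min ≤ λ_max are constants with λ_min ≤ σ₁ and σ₃ ≤ λ_max, then |𝔇 − 1| ≤ |a| ≤ λ_max − λ_min. -/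
open MeasureTheory Set Polynomial
open scoped NNReal ENNReal

noncomputable section

lemma cubic_expand (p q r : ℝ) : (X - C p) * (X - C q) * (X - C r) =
    X^3 - C (p+q+r) * X^2 + C (p*q+p*r+q*r) * X - C (p*q*r) := by
  simp only [map_add, map_mul]; ring

lemma charpoly_fin_three (M : Matrix (Fin 3) (Fin 3) ℝ) : M.charpoly =
    X^3 - C (M 0 0 + M 1 1 + M 2 2) * X^2
      + C (M 0 0 * M 1 1 - M 0 1 * M 1 0 + M 0 0 * M 2 2 - M 0 2 * M 2 0 + M 1 1 * M 2 2 - M 1 2 * M 2 1) * X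
      - C (M.det) := by
  rw [Matrix.charpoly, Matrix.det_fin_three, Matrix.det_fin_three]
  simp [Matrix.charmatrix_apply, Matrix.diagonal_apply]
  ring

lemma cubic_coeffs {e1 e2 e3 f1 f2 f3 : ℝ}
    (h : X^3 - C e1 * X^2 + C e2 * X - C e3 = (X^3 - C f1 * X^2 + C f2 * X - C f3 : ℝ[X])) :
    e1 = f1 ∧ e2 = f2 ∧ e3 = f3 := by
  refine ⟨?_, ?_, ?_⟩
  · have := congrArg (fun p => Polynomial.coeff p 2) h
    simp [coeff_X_pow] at this; linarith
  · have := congrArg (fun p => Polynomial.coeff p 1) h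
    simp [coeff_X_pow] at this; linarith
  · have := congrArg (fun p => Polynomial.coeff p 0) h
    simp [coeff_X_pow] at this; linarith

/-- Purely scalar part of the singular-value analysis. -/
lemma scalar_part {σ₁ σ₂ σ₃ D A : ℝ} (hσ0 : 0 ≤ σ₁) (h12 : σ₁ ≤ σ₂) (h23 : σ₂ ≤ σ₃)
    (hDpos : 0 < D)
    (hS1 : σ₁^2 + σ₂^2 + σ₃^2 = 1 + 2*D + A)
    (hS2 : σ₁^2*σ₂^2 + σ₁^2*σ₃^2 + σ₂^2*σ₃^2 = D^2 + 2*D + A)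
    (hS3 : σ₁^2*σ₂^2*σ₃^2 = D^2)
    (hCS : (D-1)^2 ≤ A) :
    σ₂ = 1 ∧ σ₁ * σ₃ = D ∧ A = (σ₃ - σ₁)^2 := by
  have hσ20 : (0:ℝ) ≤ σ₂ := le_trans hσ0 h12
  have hσ30 : (0:ℝ) ≤ σ₃ := le_trans hσ20 h23
  have hs12 : σ₁^2 ≤ σ₂^2 := by nlinarith
  have hs23 : σ₂^2 ≤ σ₃^2 := by nlinarith
  have hp1 : (1 - σ₁^2) * (1 - σ₂^2) * (1 - σ₃^2) = 0 := by
    linear_combination -hS1 + hS2 - hS3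
  have hs2 : σ₂^2 = 1 := by
    rcases mul_eq_zero.mp hp1 with h | h
    · rcases mul_eq_zero.mp h with h | h
      · -- σ₁² = 1
        have e1 : σ₁^2 = 1 := by linarith
        have hq : (σ₂^2 - 1) * (σ₃^2 - 1) = D^2 - (2*D + A) + 1 := by
          linear_combination hS3 - σ₂^2*σ₃^2 * e1 - hS1 + e1
        have h2g : 1 ≤ σ₂^2 := by linarith
        have h3g : 1 ≤ σ₃^2 := by linarith
        have hge : 0 ≤ (σ₂^2 - 1) * (σ₃^2 - 1) :=
          mul_nonneg (by linarith) (by linarith)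
        have h0 : (σ₂^2 - 1) * (σ₃^2 - 1) = 0 := le_antisymm (by linarith) hge
        rcases mul_eq_zero.mp h0 with h' | h'
        · linarith
        · linarith
      · linarith
    · -- σ₃² = 1
      have e3 : σ₃^2 = 1 := by linarith
      have h2l : σ₂^2 ≤ 1 := by linarith
      have h1l : σ₁^2 ≤ 1 := by linarith
      have hq : (1 - σ₁^2) * (1 - σ₂^2) = D^2 - (2*D + A) + 1 := by
        linear_combination hS3 - σ₁^2*σ₂^2 * e3 - hS1 + e3
      have hge : 0 ≤ (1 - σ₁^2) * (1 - σ₂^2) :=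
        mul_nonneg (by linarith) (by linarith)
      have h0 : (1 - σ₁^2) * (1 - σ₂^2) = 0 := le_antisymm (by linarith) hge
      rcases mul_eq_zero.mp h0 with h' | h'
      · linarith
      · linarith
  have hσ2 : σ₂ = 1 := by
    have h0 : (σ₂ - 1) * (σ₂ + 1) = 0 := by linear_combination hs2
    rcases mul_eq_zero.mp h0 with h | h
    · linarith
    · linarith
  have h13 : σ₁ * σ₃ = D := by
    have h0 : (σ₁ * σ₃ - D) * (σ₁ * σ₃ + D) = 0 := by
      linear_combination hS3 - σ₁^2*σ₃^2*hs2
    rcases mul_eq_zero.mp h0 with h | h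
    · linarith
    · have := mul_nonneg hσ0 hσ30; linarith
  refine ⟨hσ2, h13, ?_⟩
  linear_combination -hS1 + hs2 + 2*h13


set_option maxHeartbeats 1000000 in
/-- singular values of `I + a ⊗ n`.  If `|n| = 1` and
`𝔇 = det(I + a⊗n) = 1 + a·n > 0`, then the singular values `σ₁ ≤ σ₂ ≤ σ₃` of
`F = I + a⊗n` (square roots of the eigenvalues of `FᵀF`, encoded via the characteristic
polynomial) satisfy `σ₂ = 1`, `σ₁σ₃ = 𝔇` and `|a| = σ₃ − σ₁`; consequently, whenever
`0 < λ_min ≤ σ₁` and `σ₃ ≤ λ_max`, one has `|𝔇 − 1| ≤ |a| ≤ λ_max − λ_min`. -/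
theorem stmt9
    (a n : E3) (hn : ‖n‖ = 1)
    (F : Mat3) (hF : F = 1 + tens a n)
    (D : ℝ) (hD : D = 1 + dot3 a n) (hDpos : 0 < D)
    (σ₁ σ₂ σ₃ : ℝ) (hσ0 : 0 ≤ σ₁) (h12 : σ₁ ≤ σ₂) (h23 : σ₂ ≤ σ₃)
    (hchar : (F.transpose * F).charpoly =
      (X - C (σ₁ ^ 2)) * (X - C (σ₂ ^ 2)) * (X - C (σ₃ ^ 2))) :
    F.det = D ∧ σ₂ = 1 ∧ σ₁ * σ₃ = D ∧ ‖a‖ = σ₃ - σ₁ ∧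
    ∀ lmin lmax : ℝ, 0 < lmin → lmin ≤ lmax → lmin ≤ σ₁ → σ₃ ≤ lmax →
      |D - 1| ≤ ‖a‖ ∧ ‖a‖ ≤ lmax - lmin := by
  have hN : n 0 ^ 2 + n 1 ^ 2 + n 2 ^ 2 = 1 := by
    have h1 : ‖n‖^2 = 1 := by rw [hn]; norm_num
    rw [EuclideanSpace.norm_eq, Real.sq_sqrt (by positivity)] at h1
    simpa [Fin.sum_univ_three, Real.norm_eq_abs, sq_abs] using h1
  have hA : ‖a‖^2 = a 0 ^ 2 + a 1 ^ 2 + a 2 ^ 2 := by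
    rw [EuclideanSpace.norm_eq, Real.sq_sqrt (by positivity)]
    simp [Fin.sum_univ_three, Real.norm_eq_abs, sq_abs]
  have hd : D = 1 + (a 0 * n 0 + a 1 * n 1 + a 2 * n 2) := by
    rw [hD]; simp [dot3, Fin.sum_univ_three]
  have hdet : F.det = D := by
    rw [hF, Matrix.det_fin_three, hd]
    simp [tens, Matrix.one_apply, Matrix.add_apply]
    ring
  rw [charpoly_fin_three, cubic_expand] at hchar
  obtain ⟨h1, h2, h3⟩ := cubic_coeffs hchar
  rw [Matrix.det_mul, Matrix.det_transpose, hdet] at h3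
  simp only [hF, Matrix.mul_apply, Matrix.transpose_apply, Matrix.add_apply,
    Matrix.one_apply, tens, Matrix.of_apply, Fin.sum_univ_three] at h1 h2
  norm_num [Fin.ext_iff] at h1 h2
  have hS1 : σ₁^2 + σ₂^2 + σ₃^2 = 1 + 2*D + ‖a‖^2 := by
    rw [hA, hd]
    linear_combination -h1 + (a 0 ^ 2 + a 1 ^ 2 + a 2 ^ 2) * hN
  have hS2 : σ₁^2*σ₂^2 + σ₁^2*σ₃^2 + σ₂^2*σ₃^2 = D^2 + 2*D + ‖a‖^2 := by
    rw [hA, hd]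
    linear_combination -h2 + (a 0 ^ 2 + a 1 ^ 2 + a 2 ^ 2) * hN
  have hS3 : σ₁^2*σ₂^2*σ₃^2 = D^2 := by linear_combination -h3
  clear h1 h2 hchar
  have hCS : (D-1)^2 ≤ ‖a‖^2 := by
    have key : ‖a‖^2 - (D-1)^2 =
        (a 0 * n 1 - a 1 * n 0)^2 + (a 0 * n 2 - a 2 * n 0)^2 + (a 1 * n 2 - a 2 * n 1)^2
          - (a 0 ^ 2 + a 1 ^ 2 + a 2 ^ 2) * (n 0 ^ 2 + n 1 ^ 2 + n 2 ^ 2 - 1) := by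
      rw [hA, hd]; ring
    rw [hN] at key
    nlinarith [sq_nonneg (a 0 * n 1 - a 1 * n 0), sq_nonneg (a 0 * n 2 - a 2 * n 0),
      sq_nonneg (a 1 * n 2 - a 2 * n 1)]
  obtain ⟨hσ2, h13, hAeq⟩ := scalar_part hσ0 h12 h23 hDpos hS1 hS2 hS3 hCS
  have hna : ‖a‖ = σ₃ - σ₁ := by
    have h0 : (0:ℝ) ≤ σ₃ - σ₁ := by linarith
    have hfac : (‖a‖ - (σ₃ - σ₁)) * (‖a‖ + (σ₃ - σ₁)) = 0 := by linear_combination hAeq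
    rcases mul_eq_zero.mp hfac with h | h
    · linarith
    · have := norm_nonneg a; linarith
  refine ⟨hdet, hσ2, h13, hna, fun lmin lmax hl0 hll hl1 hl3 => ⟨?_, ?_⟩⟩
  · calc |D - 1| = Real.sqrt ((D-1)^2) := (Real.sqrt_sq_eq_abs _).symm
      _ ≤ Real.sqrt (‖a‖^2) := Real.sqrt_le_sqrt hCS
      _ = ‖a‖ := Real.sqrt_sq (norm_nonneg a)
  · rw [hna]; linarith
end
end
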